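/- Let ξ denote the completed Riemann zeta function ξ(s) = π^{−s/2} Γ(s/2) ζ(s), a meromorphic function on ℂ whose only poles are simple poles at s = 0 and s = 1, with residue 1 at s = 1. Then the function H(s) = ξ(1+s)^2 · (ξ(2+3s) − ξ(2+2s)) has a simple pole at s = 0 with residue ξ′(2); that is, s · ξ(1+s)^2 · (ξ(2+3s) − ξ(2+2s)) tends to ξ′(2) as s tends to 0 through nonzero complex values. -/

import Mathlib

open Filter Topology

lemma aux_h1 :
    Tendsto (fun s : ℂ => s * completedRiemannZeta (1 + s)) (𝓝[≠] (0:ℂ)) (𝓝 1) := by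
  have hcont : Tendsto (fun s : ℂ => s * completedRiemannZeta₀ (1 + s) - s / (1 + s) + 1)
      (𝓝 (0:ℂ)) (𝓝 1) := by
    have : ContinuousAt (fun s : ℂ => s * completedRiemannZeta₀ (1 + s) - s / (1 + s) + 1) 0 := by
      apply ContinuousAt.add _ continuousAt_const
      apply ContinuousAt.sub
      · exact continuousAt_id.mul
          ((differentiable_completedZeta₀.continuous.comp
            (continuous_const.add continuous_id)).continuousAt)
      · exact ContinuousAt.div continuousAt_id
          (continuous_const.add continuous_id).continuousAt (by norm_num)
    simpa using this.tendsto
  apply Tendsto.congr' _ (hcont.mono_left nhdsWithin_le_nhds)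
  filter_upwards [self_mem_nhdsWithin] with s hs
  have hs0 : s ≠ 0 := hs
  rw [completedRiemannZeta_eq (1 + s)]
  have h1 : (1 : ℂ) - (1 + s) = -s := by ring
  rw [h1, mul_sub, mul_sub, mul_one_div, mul_one_div, div_neg, div_self hs0]
  ring

lemma aux_h2 :
    Tendsto (fun s : ℂ =>
      (completedRiemannZeta (2 + 3 * s) - completedRiemannZeta (2 + 2 * s)) / s)
      (𝓝[≠] (0:ℂ)) (𝓝 (deriv completedRiemannZeta 2)) := by
  have hd : HasDerivAt completedRiemannZeta (deriv completedRiemannZeta 2) 2 :=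
    (differentiableAt_completedZeta (by norm_num) (by norm_num)).hasDerivAt
  have h3 : HasDerivAt (fun s : ℂ => completedRiemannZeta (2 + 3 * s))
      (deriv completedRiemannZeta 2 * 3) 0 := by
    have hin : HasDerivAt (fun s : ℂ => 2 + 3 * s) 3 0 := by
      simpa using ((hasDerivAt_id (0:ℂ)).const_mul 3).const_add 2
    have hd' : HasDerivAt completedRiemannZeta (deriv completedRiemannZeta 2)
        ((fun s : ℂ => 2 + 3 * s) 0) := by simpa using hd
    exact hd'.comp 0 hin
  have h2 : HasDerivAt (fun s : ℂ => completedRiemannZeta (2 + 2 * s))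
      (deriv completedRiemannZeta 2 * 2) 0 := by
    have hin : HasDerivAt (fun s : ℂ => 2 + 2 * s) 2 0 := by
      simpa using ((hasDerivAt_id (0:ℂ)).const_mul 2).const_add 2
    have hd' : HasDerivAt completedRiemannZeta (deriv completedRiemannZeta 2)
        ((fun s : ℂ => 2 + 2 * s) 0) := by simpa using hd
    exact hd'.comp 0 hin
  have hg : HasDerivAt (fun s : ℂ =>
      completedRiemannZeta (2 + 3 * s) - completedRiemannZeta (2 + 2 * s))
      (deriv completedRiemannZeta 2) 0 := by
    have := h3.sub h2
    rw [show deriv completedRiemannZeta 2 = deriv completedRiemannZeta 2 * 3 - deriv completedRiemannZeta 2 * 2 by ring]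
    exact this
  have := hg.tendsto_slope_zero
  simpa [slope_def_field, div_eq_inv_mul] using
    (hasDerivAt_iff_tendsto_slope.mp hg).congr' (by
      filter_upwards [self_mem_nhdsWithin] with s hs
      simp [slope_def_field, sub_zero, div_eq_mul_inv, mul_comm])

/-- Let `ξ = completedRiemannZeta` be the completed Riemann zeta function
`ξ(s) = π^(-s/2) Γ(s/2) ζ(s)`. Then `ξ(1+s)^2 (ξ(2+3s) - ξ(2+2s))` has a simple pole at
`s = 0` with residue `ξ'(2)`: i.e. `s * ξ(1+s)^2 * (ξ(2+3s) - ξ(2+2s)) → ξ'(2)` as `s → 0`,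
`s ≠ 0`. -/
theorem stmt4 :
    Tendsto
      (fun s : ℂ =>
        s * completedRiemannZeta (1 + s) ^ 2 *
          (completedRiemannZeta (2 + 3 * s) - completedRiemannZeta (2 + 2 * s)))
      (𝓝[≠] 0) (𝓝 (deriv completedRiemannZeta 2)) := by
  have h := ((aux_h1.mul aux_h1).mul aux_h2)
  rw [one_mul, one_mul] at h
  apply h.congr'
  filter_upwards [self_mem_nhdsWithin] with s hs
  have hs0 : s ≠ 0 := hs
  field_simp
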